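/- Let n ≥ 1 and let A ⊆ ℕ with |A| ≥ n. Then A is minimal in ({X ⊆ ℕ : |X| ≥ n}, ≤_fe) — i.e., every B ⊆ ℕ with |B| ≥ n and B ≤_fe A satisfies A ≤_fe B — if and only if 0 ∈ A and |A| = n. -/

import Mathlib

/-- `A` is finitely embeddable in `B`: every finite subset of `A` has a
rightward translate contained in `B`. -/
def FE (A B : Set ℕ) : Prop :=
  ∀ F : Finset ℕ, (F : Set ℕ) ⊆ A → ∃ k : ℕ, ∀ a ∈ F, k + a ∈ B

/-- A set is thick if it contains arbitrarily long intervals. -/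
def Thick (T : Set ℕ) : Prop :=
  ∀ n : ℕ, ∃ k : ℕ, ∀ i ≤ n, k + i ∈ T

/-- A set is piecewise syndetic if some finite union of its translates is thick. -/
def PWSyndetic (A : Set ℕ) : Prop :=
  ∃ n : ℕ, Thick {m : ℕ | ∃ i ≤ n, ∃ a ∈ A, m = a + i}

/-- Upper Banach density. -/
noncomputable def BD (A : Set ℕ) : ℝ :=
  Filter.atTop.limsup
    (fun n : ℕ => (⨆ k : ℕ, ((A ∩ Set.Icc (k + 1) (k + n)).ncard : ℝ)) / n)

/-- Finite embeddability of ultrafilters. -/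
def UFE (U V : Ultrafilter ℕ) : Prop :=
  ∀ B ∈ V, ∃ A ∈ U, FE A B

/-- `A` contains arbitrarily long arithmetic progressions. -/
def HasAPs (A : Set ℕ) : Prop :=
  ∀ k : ℕ, ∃ a : ℕ, ∃ d ≥ 1, ∀ i < k, a + i * d ∈ A

theorem fe_minimal_iff (n : ℕ) (hn : 1 ≤ n) (A : Set ℕ) (hA : (n : ℕ∞) ≤ A.encard) :
    (∀ B : Set ℕ, (n : ℕ∞) ≤ B.encard → FE B A → FE A B) ↔
      (0 ∈ A ∧ A.encard = n) := by
  constructor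
  · intro hmin
    obtain ⟨F₀, hF₀sub, hF₀card⟩ := Set.exists_subset_encard_eq hA
    have hF₀fin : F₀.Finite := Set.finite_of_encard_eq_coe hF₀card
    have hF₀ne : F₀.Nonempty := by
      rw [← Set.encard_pos, hF₀card]
      exact_mod_cast Nat.lt_of_lt_of_le Nat.zero_lt_one hn
    set m := sInf F₀ with hm
    have hmF : m ∈ F₀ := Nat.sInf_mem hF₀ne
    have hle : ∀ f ∈ F₀, m ≤ f := fun f hf => Nat.sInf_le hf
    set B : Set ℕ := {x | m + x ∈ F₀} with hB
    have himg : (fun x => m + x) '' B = F₀ := by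
      ext f
      constructor
      · rintro ⟨x, hx, rfl⟩; exact hx
      · intro hf
        exact ⟨f - m, by simpa [hB] using (Nat.add_sub_cancel' (hle f hf)).symm ▸ hf,
          Nat.add_sub_cancel' (hle f hf)⟩
    have hBcard : B.encard = n := by
      rw [← hF₀card, ← himg, (add_right_injective m).encard_image _]
    have hFEBA : FE B A := fun G hG => ⟨m, fun a ha => hF₀sub (hG ha)⟩
    have hFEAB : FE A B := hmin B (le_of_eq hBcard.symm) hFEBA
    have hAle : A.encard ≤ n := by
      by_contra h
      push_neg at h
      have h1 : ((n + 1 : ℕ) : ℕ∞) ≤ A.encard := by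
        push_cast
        exact Order.add_one_le_of_lt h
      obtain ⟨S, hSsub, hScard⟩ := Set.exists_subset_encard_eq h1
      have hSfin : S.Finite := Set.finite_of_encard_eq_coe hScard
      obtain ⟨k, hk⟩ := hFEAB hSfin.toFinset (by simpa using hSsub)
      have himg2 : (fun x => k + x) '' S ⊆ B := by
        rintro _ ⟨x, hx, rfl⟩
        exact hk x (hSfin.mem_toFinset.mpr hx)
      have h2 := Set.encard_mono himg2
      rw [(add_right_injective k).encard_image _, hScard, hBcard] at h2
      exact absurd h2 (by exact_mod_cast Nat.not_succ_le_self n)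
    have hAcard : A.encard = n := le_antisymm hAle hA
    have hAfin : A.Finite := Set.finite_of_encard_eq_coe hAcard
    obtain ⟨k, hk⟩ := hFEAB hAfin.toFinset (by simp)
    have hsub : (fun x => k + x) '' A ⊆ B := by
      rintro _ ⟨x, hx, rfl⟩
      exact hk x (hAfin.mem_toFinset.mpr hx)
    have hBfin : B.Finite := Set.finite_of_encard_eq_coe hBcard
    have heq : (fun x => k + x) '' A = B :=
      (hBfin.subset hsub).eq_of_subset_of_encard_le hsub
        (by rw [(add_right_injective k).encard_image _, hAcard, hBcard])
    have h0B : (0 : ℕ) ∈ B := by simpa [hB] using hmF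
    rw [← heq] at h0B
    obtain ⟨a, ha, ha0⟩ := h0B
    simp only [] at ha0
    have : a = 0 := by omega
    exact ⟨this ▸ ha, hAcard⟩
  · rintro ⟨h0, hAcard⟩ B hB hFEBA
    have hAfin : A.Finite := Set.finite_of_encard_eq_coe hAcard
    obtain ⟨G, hGsub, hGcard⟩ := Set.exists_subset_encard_eq hB
    have hGfin : G.Finite := Set.finite_of_encard_eq_coe hGcard
    obtain ⟨k, hk⟩ := hFEBA hGfin.toFinset (by simpa using hGsub)
    have hsub : (fun x => k + x) '' G ⊆ A := by
      rintro _ ⟨x, hx, rfl⟩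
      exact hk x (hGfin.mem_toFinset.mpr hx)
    have heq : (fun x => k + x) '' G = A :=
      (hAfin.subset hsub).eq_of_subset_of_encard_le hsub
        (by rw [(add_right_injective k).encard_image _, hGcard, hAcard])
    have h0 : (0 : ℕ) ∈ (fun x => k + x) '' G := heq ▸ h0
    obtain ⟨g, hg, hg0⟩ := h0
    simp only [] at hg0
    have hk0 : k = 0 := by omega
    have hAB : A ⊆ B := by
      rw [← heq]
      rintro _ ⟨x, hx, rfl⟩
      simpa [hk0] using hGsub hx
    exact fun F hF => ⟨0, fun a ha => by simpa using hAB (hF ha)⟩
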